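/- Löb's theorem: let T be a computably axiomatized extension of Peano arithmetic whose provability predicate satisfies the Hilbert–Bernays–Löb conditions and the diagonal lemma. For any sentence P, if T ⊢ □P → P then T ⊢ P. Consequently, any Henkin sentence H with T ⊢ H ↔ □H is provable in T. -/

import Mathlib

open FirstOrder FirstOrder.Language

/-- The function symbols of the language of arithmetic: `0`, `S`, `+`, `×`. -/
inductive ArithFunc : ℕ → Type
  | zero : ArithFunc 0
  | succ : ArithFunc 1
  | add : ArithFunc 2
  | mul : ArithFunc 2

/-- The first-order language of arithmetic `{0, S, +, ×, =}` (equality is built in). -/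
def LA : FirstOrder.Language := ⟨ArithFunc, fun _ => Empty⟩

instance : Encodable (Σ n, LA.Functions n) :=
  Encodable.ofLeftInverse
    (fun f => match f with
      | ⟨_, .zero⟩ => 0 | ⟨_, .succ⟩ => 1 | ⟨_, .add⟩ => 2 | ⟨_, .mul⟩ => 3)
    (fun n => match n with
      | 0 => ⟨0, .zero⟩ | 1 => ⟨1, .succ⟩ | 2 => ⟨2, .add⟩ | _ => ⟨2, .mul⟩)
    (fun f => by rcases f with ⟨_, f⟩; cases f <;> rfl)

instance (n : ℕ) : Encodable (LA.Relations n) := inferInstanceAs (Encodable Empty)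

/-- The term `0`. -/
def zeroT {α : Type} : LA.Term α := Term.func ArithFunc.zero ![]
/-- The successor of a term. -/
def succT {α : Type} (t : LA.Term α) : LA.Term α := Term.func ArithFunc.succ ![t]
/-- The sum of two terms. -/
def addT {α : Type} (t s : LA.Term α) : LA.Term α := Term.func ArithFunc.add ![t, s]
/-- The product of two terms. -/
def mulT {α : Type} (t s : LA.Term α) : LA.Term α := Term.func ArithFunc.mul ![t, s]

/-- The numeral `n̄ = Sⁿ(0)`. -/
def num {α : Type} : ℕ → LA.Term α
  | 0 => zeroT
  | n + 1 => succT (num n)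

/-- Robinson's arithmetic `Q`. -/
def Q : LA.Theory :=
  { ∀' ∼(succT &0 =' zeroT),
    ∀' ∀' (succT &0 =' succT &1 ⟹ &0 =' &1),
    ∀' ((&0 =' zeroT) ⊔ ∃' (&0 =' succT &1)),
    ∀' (addT &0 zeroT =' &0),
    ∀' ∀' (addT &0 (succT &1) =' succT (addT &0 &1)),
    ∀' (mulT &0 zeroT =' zeroT),
    ∀' ∀' (mulT &0 (succT &1) =' addT (mulT &0 &1) &0) }

/-- The standard model `ℕ` of arithmetic. -/
instance : LA.Structure ℕ where
  funMap {_} f := match f with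
    | .zero => fun _ => 0
    | .succ => fun v => v 0 + 1
    | .add => fun v => v 0 + v 1
    | .mul => fun v => v 0 * v 1
  RelMap {_} r := Empty.elim r

/-- The Gödel number of a sentence, via Mathlib's encoding of first-order formulas. -/
def gnum (φ : LA.Sentence) : ℕ := Encodable.encode (BoundedFormula.listEncode φ)

/-- A theory is computably axiomatized when its set of (Gödel numbers of) axioms is
decidable. -/
def ComputablyAxiomatized (T : LA.Theory) : Prop :=
  ComputablePred fun n : ℕ => ∃ φ ∈ T, gnum φ = n

/-- The older Mathlib `Formula.iAlls`: `iAlls f φ` transforms a `L.Formula α` into a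
`L.Formula β` by renaming variables with `f` and universally quantifying over all variables
`Sum.inr _`. -/
noncomputable def formulaIAllsOld {L : FirstOrder.Language} {α β γ : Type*} [Finite γ]
    (f : α → β ⊕ γ) (φ : L.Formula α) : L.Formula β :=
  let e := Classical.choice (Classical.choose_spec (Finite.exists_equiv_fin γ))
  (BoundedFormula.relabel (fun a => Sum.map id e (f a)) φ).alls

/-- The induction axiom for a formula `φ(x⃗, y)` (parameters `x⃗`, induction variable `y`):
`∀x⃗ ∀y ((φ(x⃗,0) ∧ ∀u (φ(x⃗,u) → φ(x⃗,S u))) → φ(x⃗,y))`. -/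
noncomputable def indAxiom {m : ℕ} (φ : LA.Formula (Fin m ⊕ Fin 1)) : LA.Sentence :=
  let subLast : LA.Term (Fin m ⊕ Fin 1) → LA.Formula (Fin m ⊕ Fin 1) := fun t =>
    BoundedFormula.subst φ (Sum.elim (fun i => Term.var (Sum.inl i)) fun _ => t)
  let base := subLast zeroT
  let step : LA.Formula (Fin m) :=
    formulaIAllsOld (id : Fin m ⊕ Fin 1 → Fin m ⊕ Fin 1)
      (φ ⟹ subLast (succT (Term.var (Sum.inr 0))))
  formulaIAllsOld (Sum.inr : Fin m ⊕ Fin 1 → Empty ⊕ (Fin m ⊕ Fin 1))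
    ((base ⊓ Formula.relabel Sum.inl step) ⟹ φ)

/-- Peano arithmetic: Robinson's arithmetic together with the induction scheme. -/
noncomputable def PA : LA.Theory :=
  Q ∪ ⋃ m : ℕ, Set.range fun φ : LA.Formula (Fin m ⊕ Fin 1) => indAxiom φ

/-- `□A`: the sentence `Bew(⌜A⌝)`. -/
def boxS (Bew : LA.Formula (Fin 1)) (A : LA.Sentence) : LA.Sentence :=
  BoundedFormula.subst Bew fun _ => (num (gnum A) : LA.Term Empty)

/-- Löb's theorem: if `T` is a computably axiomatized extension of Peano
arithmetic whose provability predicate satisfies the Hilbert–Bernays–Löb conditions and the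
diagonal lemma, then for any sentence `P`, `T ⊢ □P → P` implies `T ⊢ P`; consequently any
Henkin sentence `H` with `T ⊢ H ↔ □H` is provable in `T`. -/
theorem lob_theorem (T : LA.Theory) (hPA : PA ⊆ T)
    (hax : ComputablyAxiomatized T)
    (Bew : LA.Formula (Fin 1))
    (hbl1 : ∀ A : LA.Sentence, T ⊨ᵇ A → T ⊨ᵇ boxS Bew A)
    (hbl2 : ∀ A B : LA.Sentence, T ⊨ᵇ (boxS Bew (A ⟹ B) ⟹ boxS Bew A ⟹ boxS Bew B))
    (hbl3 : ∀ A : LA.Sentence, T ⊨ᵇ (boxS Bew A ⟹ boxS Bew (boxS Bew A)))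
    (hdiag : ∀ C : LA.Formula (Fin 1), ∃ G : LA.Sentence,
      T ⊨ᵇ (G ⇔ BoundedFormula.subst C fun _ => (num (gnum G) : LA.Term Empty))) :
    (∀ P : LA.Sentence, T ⊨ᵇ (boxS Bew P ⟹ P) → T ⊨ᵇ P) ∧
      (∀ H : LA.Sentence, T ⊨ᵇ (H ⇔ boxS Bew H) → T ⊨ᵇ H) := by

  -- Helper: modus ponens at the level of semantic consequence.
  have mp : ∀ A B : LA.Sentence, T ⊨ᵇ (A ⟹ B) → T ⊨ᵇ A → T ⊨ᵇ B := by
    intro A B hAB hA M v xs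
    have h1 := hAB M v xs
    have h2 := hA M v xs
    rw [BoundedFormula.realize_imp] at h1
    exact h1 h2
  have main : ∀ P : LA.Sentence, T ⊨ᵇ (boxS Bew P ⟹ P) → T ⊨ᵇ P := by
    intro P hP
    -- the formula C(x) := Bew(x) → P
    obtain ⟨L, hL⟩ := hdiag (Bew.imp (Formula.relabel (fun e => Empty.elim e) P))
    -- T ⊨ L ↔ (□L → P), semantically
    have hLiff : ∀ (M : Theory.ModelType T) (v : Empty → M) (xs : Fin 0 → M),
        BoundedFormula.Realize L v xs ↔ (BoundedFormula.Realize (boxS Bew L) v xs → BoundedFormula.Realize P v xs) := by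
      intro M v xs
      have hxs : xs = default := Subsingleton.elim _ _
      subst hxs
      have h := hL M v default
      rw [BoundedFormula.realize_iff] at h
      rw [h]
      have : (BoundedFormula.subst (Bew.imp (Formula.relabel (fun e => Empty.elim e) P))
          fun _ => (num (gnum L) : LA.Term Empty)) =
        (boxS Bew L).imp (BoundedFormula.subst (Formula.relabel (fun e => Empty.elim e) P)
          fun _ => (num (gnum L) : LA.Term Empty)) := rfl
      rw [this, BoundedFormula.realize_imp]
      have hPeq : (BoundedFormula.subst
          ((Formula.relabel (fun e => Empty.elim e) P : LA.Formula (Fin 1)))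
          fun _ => (num (gnum L) : LA.Term Empty)).Realize v default ↔
            BoundedFormula.Realize P v default := by
        rw [BoundedFormula.realize_subst]
        rw [show ∀ w : Fin 1 → M, BoundedFormula.Realize
            ((Formula.relabel (fun e => Empty.elim e) P : LA.Formula (Fin 1))) w default =
            Formula.Realize ((Formula.relabel (fun e => Empty.elim e) P : LA.Formula (Fin 1))) w
            from fun w => rfl]
        rw [Formula.realize_relabel]
        exact iff_of_eq (congrArg _ (funext fun e => e.elim))
      rw [hPeq]
    -- T ⊨ L ⟹ (□L ⟹ P)
    have h1 : T ⊨ᵇ (L ⟹ (boxS Bew L ⟹ P)) := by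
      intro M v xs
      rw [BoundedFormula.realize_imp, BoundedFormula.realize_imp]
      exact (hLiff M v xs).mp
    have h2 := hbl1 _ h1
    have h4 : T ⊨ᵇ (boxS Bew L ⟹ boxS Bew (boxS Bew L ⟹ P)) :=
      mp _ _ (hbl2 L (boxS Bew L ⟹ P)) h2
    have h5 := hbl2 (boxS Bew L) P
    have h6 := hbl3 L
    -- T ⊨ □L ⟹ P
    have hLP : T ⊨ᵇ (boxS Bew L ⟹ P) := by
      intro M v xs
      rw [BoundedFormula.realize_imp]
      intro hbox
      have a4 := h4 M v xs; rw [BoundedFormula.realize_imp] at a4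
      have a6 := h6 M v xs; rw [BoundedFormula.realize_imp] at a6
      have a5 := h5 M v xs
      rw [BoundedFormula.realize_imp, BoundedFormula.realize_imp] at a5
      have aP := hP M v xs; rw [BoundedFormula.realize_imp] at aP
      exact aP (a5 (a4 hbox) (a6 hbox))
    -- T ⊨ L
    have hLprov : T ⊨ᵇ L := by
      intro M v xs
      exact (hLiff M v xs).mpr fun hbox => by
        have := hLP M v xs; rw [BoundedFormula.realize_imp] at this; exact this hbox
    exact mp _ _ hLP (hbl1 _ hLprov)
  refine ⟨main, fun H hH => ?_⟩
  apply main H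
  intro M v xs
  rw [BoundedFormula.realize_imp]
  have h := hH M v xs
  rw [BoundedFormula.realize_iff] at h
  exact h.mpr
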